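/- Let g: ℝⁿ → ℝ be μ-strongly convex with subgradients bounded by M on a closed convex set W, let ŵ minimize a target over W, and suppose at a point v ∈ W with subgradient s ∈ ∂g(v), ‖s‖ ≤ M, the update v⁺ = Proj_W(v − (ε/‖s‖²) s) is performed and g(v) − g(ŵ) > ε. Then ‖v⁺ − ŵ‖² ≤ (1 − εμ/M²)‖v − ŵ‖² − ε²/M². -/

import Mathlib

open scoped RealInnerProductSpace

lemma ssg_proj_var_ineq {n : ℕ} {W : Set (EuclideanSpace ℝ (Fin n))}
    (hWconv : Convex ℝ W) {z vplus what : EuclideanSpace ℝ (Fin n)}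
    (hvplusW : vplus ∈ W) (hwhatW : what ∈ W)
    (hproj : ∀ u ∈ W, ‖vplus - z‖ ≤ ‖u - z‖) :
    ⟪z - vplus, what - vplus⟫ ≤ 0 := by
  haveI : Nonempty W := ⟨⟨vplus, hvplusW⟩⟩
  have hbdd : BddBelow (Set.range fun w : W => ‖z - w‖) := by
    refine ⟨0, ?_⟩
    rintro x ⟨w, rfl⟩
    exact norm_nonneg _
  have hinf : ‖z - vplus‖ = ⨅ w : W, ‖z - w‖ := by
    apply le_antisymm
    · apply le_ciInf
      intro w
      rw [norm_sub_rev, norm_sub_rev z]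
      exact hproj w w.2
    · exact ciInf_le hbdd ⟨vplus, hvplusW⟩
  exact (norm_eq_iInf_iff_real_inner_le_zero hWconv hvplusW).mp hinf what hwhatW

set_option maxHeartbeats 1000000 in
/-- per-iteration contraction of the switching subgradient method:
if `g` is μ-strongly convex with subgradients bounded by `M` on the closed convex set
`W`, `ŵ` minimizes `g` over `W`, `v ∈ W` has a subgradient `s` with `‖s‖ ≤ M`
(strong convexity giving `g(u) ≥ g(v) + ⟨s, u−v⟩ + (μ/2)‖u−v‖²`), the update
`v⁺ = Proj_W(v − (ε/‖s‖²) s)` is performed, and `g(v) − g(ŵ) > ε`, then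
`‖v⁺ − ŵ‖² ≤ (1 − εμ/M²)‖v − ŵ‖² − ε²/M²`. -/
theorem ssg_contraction_step {n : ℕ} (μ M ε : ℝ) (hμ : 0 < μ) (hM : 0 < M)
    (hε : 0 < ε)
    (W : Set (EuclideanSpace ℝ (Fin n))) (hWc : IsClosed W) (hWconv : Convex ℝ W)
    (g : EuclideanSpace ℝ (Fin n) → ℝ) (hg : StrongConvexOn W μ g)
    (what : EuclideanSpace ℝ (Fin n)) (hwhatW : what ∈ W)
    (hmin : ∀ u ∈ W, g what ≤ g u)
    (v : EuclideanSpace ℝ (Fin n)) (hvW : v ∈ W)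
    (s : EuclideanSpace ℝ (Fin n)) (hs0 : s ≠ 0) (hsM : ‖s‖ ≤ M)
    (hsub : ∀ u ∈ W, g v + ⟪s, u - v⟫ + μ / 2 * ‖u - v‖ ^ 2 ≤ g u)
    (hgap : g v - g what > ε)
    (vplus : EuclideanSpace ℝ (Fin n)) (hvplusW : vplus ∈ W)
    -- `vplus` is the Euclidean projection of `v − (ε/‖s‖²) s` onto `W`
    (hproj : ∀ u ∈ W, ‖vplus - (v - (ε / ‖s‖ ^ 2) • s)‖ ≤ ‖u - (v - (ε / ‖s‖ ^ 2) • s)‖) :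
    ‖vplus - what‖ ^ 2 ≤ (1 - ε * μ / M ^ 2) * ‖v - what‖ ^ 2 - ε ^ 2 / M ^ 2 := by
  set η : ℝ := ε / ‖s‖ ^ 2 with hη
  set z : EuclideanSpace ℝ (Fin n) := v - η • s with hz
  have hsnorm : (0:ℝ) < ‖s‖ := norm_pos_iff.mpr hs0
  have hs2 : (0:ℝ) < ‖s‖ ^ 2 := by positivity
  -- variational inequality from projection
  have hvar : ⟪z - vplus, what - vplus⟫ ≤ 0 :=
    ssg_proj_var_ineq hWconv hvplusW hwhatW hproj
  -- nonexpansiveness toward what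
  have hkey : ‖vplus - what‖ ^ 2 ≤ ‖z - what‖ ^ 2 := by
    have : ‖z - what‖ ^ 2 =
        ‖z - vplus‖ ^ 2 + 2 * ⟪z - vplus, vplus - what⟫ + ‖vplus - what‖ ^ 2 := by
      have h1 : z - what = (z - vplus) + (vplus - what) := by abel
      rw [h1, norm_add_sq_real]
    have h2 : ⟪z - vplus, vplus - what⟫ = -⟪z - vplus, what - vplus⟫ := by
      rw [← inner_neg_right]; congr 1; abel
    nlinarith [sq_nonneg ‖z - vplus‖]
  -- expand ‖z - what‖²
  have hexp : ‖z - what‖ ^ 2 =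
      ‖v - what‖ ^ 2 - 2 * η * ⟪s, v - what⟫ + η ^ 2 * ‖s‖ ^ 2 := by
    have h1 : z - what = (v - what) - η • s := by rw [hz]; abel
    rw [h1, norm_sub_sq_real, real_inner_smul_right, norm_smul, real_inner_comm]
    simp [abs_of_pos, mul_pow]
    ring
  -- subgradient inequality at what
  have hsg := hsub what hwhatW
  have hip : ⟪s, what - v⟫ = -⟪s, v - what⟫ := by
    rw [← inner_neg_right]; congr 1; abel
  have hnorm_eq : ‖what - v‖ = ‖v - what‖ := norm_sub_rev _ _
  have hlow : ε + μ / 2 * ‖v - what‖ ^ 2 ≤ ⟪s, v - what⟫ := by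
    rw [hip, hnorm_eq] at hsg
    have := hmin v hvW
    nlinarith
  -- arithmetic
  have hMs : ‖s‖ ^ 2 ≤ M ^ 2 := by nlinarith [norm_nonneg s]
  have hηs : η * ‖s‖ ^ 2 = ε := by rw [hη, div_mul_cancel₀ _ hs2.ne']
  have hD : (0:ℝ) ≤ ‖v - what‖ ^ 2 := by positivity
  have hηpos : 0 < η := by positivity
  calc ‖vplus - what‖ ^ 2 ≤ ‖z - what‖ ^ 2 := hkey
    _ = ‖v - what‖ ^ 2 - 2 * η * ⟪s, v - what⟫ + η ^ 2 * ‖s‖ ^ 2 := hexp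
    _ ≤ ‖v - what‖ ^ 2 - ε * μ / ‖s‖ ^ 2 * ‖v - what‖ ^ 2 - ε ^ 2 / ‖s‖ ^ 2 := by
        have h2 : η ^ 2 * ‖s‖ ^ 2 = ε ^ 2 / ‖s‖ ^ 2 := by
          field_simp [hη]; rw [← hηs]; ring
        have h3 : ε * μ / ‖s‖ ^ 2 = η * μ := by rw [hη]; ring
        nlinarith
    _ ≤ (1 - ε * μ / M ^ 2) * ‖v - what‖ ^ 2 - ε ^ 2 / M ^ 2 := by
        have hM2 : (0:ℝ) < M ^ 2 := by positivity
        have h4 : ε ^ 2 / M ^ 2 ≤ ε ^ 2 / ‖s‖ ^ 2 := by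
          apply div_le_div_of_nonneg_left (by positivity) hs2 hMs
        have h5 : ε * μ / M ^ 2 * ‖v - what‖ ^ 2 ≤ ε * μ / ‖s‖ ^ 2 * ‖v - what‖ ^ 2 := by
          apply mul_le_mul_of_nonneg_right _ hD
          apply div_le_div_of_nonneg_left (by positivity) hs2 hMs
        nlinarith
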